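/- For every integer k ≥ 1 and every integer n with 2^{2k-1} ≤ n ≤ 2^{2k+1} - 1, we have S(n) ≥ 2^{k-1}; moreover, S(n) = 2^{k-1} if and only if n = 3·4^{k-1} - 1. -/

import Mathlib

/-- `inv2 n` is the number of inversions in the binary representation of `n`,
i.e. the number of pairs of bit positions `a > b` such that bit `a` of `n` is `1`
and bit `b` of `n` is `0`. -/
def inv2 (n : ℕ) : ℕ :=
  ((Finset.range (n + 1) ×ˢ Finset.range (n + 1)).filter
    (fun p => p.2 < p.1 ∧ n.testBit p.1 = true ∧ n.testBit p.2 = false)).card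

/-- `iSeq n = (-1)^(inv2 n)`. -/
def iSeq (n : ℕ) : ℤ := (-1) ^ inv2 n

/-- The summatory function `S N = ∑_{0 ≤ n ≤ N} iSeq n`. -/
def S (N : ℕ) : ℤ := ∑ n ∈ Finset.range (N + 1), iSeq n

/-- indicator for an inversion pair -/
def Tm (n a b : ℕ) : ℕ := if b < a ∧ n.testBit a = true ∧ n.testBit b = false then 1 else 0

def Fm (n L : ℕ) : ℕ := ∑ a ∈ Finset.range L, ∑ b ∈ Finset.range L, Tm n a b

def cnt (n L : ℕ) : ℕ := ∑ b ∈ Finset.range L, if n.testBit b then 1 else 0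

lemma inv2_eq_F (n : ℕ) : inv2 n = Fm n (n+1) := by
  rw [inv2, Finset.card_filter, Finset.sum_product]
  rfl

lemma F_stable (n L M : ℕ) (h : n < 2^L) : Fm n (L + M) = Fm n L := by
  induction M with
  | zero => rfl
  | succ M ih =>
    have hb : n.testBit (L + M) = false :=
      Nat.testBit_lt_two_pow (lt_of_lt_of_le h (Nat.pow_le_pow_right (by norm_num) (by omega)))
    have : Fm n (L + M + 1) = Fm n (L + M) := by
      rw [Fm, Fm, Finset.sum_range_succ]
      have h1 : ∀ a ∈ Finset.range (L+M), (∑ b ∈ Finset.range (L+M+1), Tm n a b)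
          = ∑ b ∈ Finset.range (L+M), Tm n a b := by
        intro a ha
        rw [Finset.sum_range_succ]
        have : Tm n a (L+M) = 0 := by
          simp only [Finset.mem_range] at ha
          simp [Tm]; omega
        omega
      rw [Finset.sum_congr rfl h1]
      have : (∑ b ∈ Finset.range (L+M+1), Tm n (L+M) b) = 0 := by
        apply Finset.sum_eq_zero
        intro b _
        simp [Tm, hb]
      omega
    have e : L + (M+1) = L+M+1 := rfl
    rw [e, this, ih]

lemma cnt_stable (n L M : ℕ) (h : n < 2^L) : cnt n (L + M) = cnt n L := by
  induction M with
  | zero => rfl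
  | succ M ih =>
    have hb : n.testBit (L + M) = false :=
      Nat.testBit_lt_two_pow (lt_of_lt_of_le h (Nat.pow_le_pow_right (by norm_num) (by omega)))
    have e : L + (M+1) = (L+M)+1 := rfl
    rw [e, cnt, Finset.sum_range_succ, hb]
    simp only [Bool.false_eq_true, if_false, add_zero]
    exact ih

lemma testBit_two_mul_zero (n : ℕ) : (2*n).testBit 0 = false := by
  simp [Nat.testBit_zero, Nat.mul_mod_right]

lemma testBit_two_mul_add_one_zero (n : ℕ) : (2*n+1).testBit 0 = true := by
  simp [Nat.testBit_zero, Nat.mul_add_mod]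

lemma mod_two_fact (n : ℕ) : (2*n+1) % 2 = 1 := by omega

lemma testBit_two_mul_succ (n i : ℕ) : (2*n).testBit (i+1) = n.testBit i := by
  rw [Nat.testBit_add_one]
  congr 1
  omega

lemma testBit_two_mul_add_one_succ (n i : ℕ) : (2*n+1).testBit (i+1) = n.testBit i := by
  rw [Nat.testBit_add_one]
  congr 1
  omega

lemma F_even (n L : ℕ) : Fm (2*n) (L+1) = Fm n L + cnt n L := by
  rw [Fm, Finset.sum_range_succ']
  have h0 : (∑ b ∈ Finset.range (L+1), Tm (2*n) 0 b) = 0 := by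
    apply Finset.sum_eq_zero; intro b _; simp [Tm]
  rw [h0]
  have h1 : ∀ a ∈ Finset.range L, (∑ b ∈ Finset.range (L+1), Tm (2*n) (a+1) b)
      = (∑ b ∈ Finset.range L, Tm n a b) + (if n.testBit a then 1 else 0) := by
    intro a _
    rw [Finset.sum_range_succ']
    have e1 : ∀ b ∈ Finset.range L, Tm (2*n) (a+1) (b+1) = Tm n a b := by
      intro b _
      simp [Tm, testBit_two_mul_succ, Nat.add_lt_add_iff_right]
    have e2 : Tm (2*n) (a+1) 0 = if n.testBit a then 1 else 0 := by
      simp [Tm, testBit_two_mul_succ, testBit_two_mul_zero]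
    rw [Finset.sum_congr rfl e1, e2]
  rw [Finset.sum_congr rfl h1, Finset.sum_add_distrib]
  simp [Fm, cnt]

lemma F_odd (n L : ℕ) : Fm (2*n+1) (L+1) = Fm n L := by
  rw [Fm, Finset.sum_range_succ']
  have h0 : (∑ b ∈ Finset.range (L+1), Tm (2*n+1) 0 b) = 0 := by
    apply Finset.sum_eq_zero; intro b _; simp [Tm]
  rw [h0]
  have h1 : ∀ a ∈ Finset.range L, (∑ b ∈ Finset.range (L+1), Tm (2*n+1) (a+1) b)
      = ∑ b ∈ Finset.range L, Tm n a b := by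
    intro a _
    rw [Finset.sum_range_succ']
    have : Tm (2*n+1) (a+1) 0 = 0 := by simp [Tm, mod_two_fact]
    rw [this]
    simp only [add_zero]
    apply Finset.sum_congr rfl
    intro b _
    simp [Tm, testBit_two_mul_add_one_succ, Nat.add_lt_add_iff_right, mod_two_fact]
  rw [Finset.sum_congr rfl h1]
  simp [Fm]

lemma cnt_even (n L : ℕ) : cnt (2*n) (L+1) = cnt n L := by
  rw [cnt, Finset.sum_range_succ']
  simp [testBit_two_mul_zero, testBit_two_mul_succ, cnt]

lemma cnt_odd (n L : ℕ) : cnt (2*n+1) (L+1) = cnt n L + 1 := by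
  rw [cnt, Finset.sum_range_succ']
  simp [testBit_two_mul_add_one_zero, testBit_two_mul_add_one_succ, cnt, mod_two_fact]

/-- Thue-Morse-type sign -/
def tm (n : ℕ) : ℤ := (-1) ^ cnt n (n+1)

example : True := trivial

lemma n_lt_two_pow (n : ℕ) : n < 2^(n+1) :=
  lt_of_lt_of_le (Nat.lt_two_pow_self (n := n)) (Nat.pow_le_pow_right (by norm_num) (by omega))

lemma iSeq_odd (n : ℕ) : iSeq (2*n+1) = iSeq n := by
  have h1 : inv2 (2*n+1) = inv2 n := by
    rw [inv2_eq_F, inv2_eq_F]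
    have e : 2*n+1+1 = (2*n+1)+1 := rfl
    rw [e, F_odd]
    have e2 : 2*n+1 = (n+1) + n := by omega
    rw [e2, F_stable n (n+1) n (n_lt_two_pow n)]
  rw [iSeq, iSeq, h1]

lemma cnt_top (n : ℕ) : cnt n (n+1+n) = cnt n (n+1) := cnt_stable n (n+1) n (n_lt_two_pow n)

lemma inv2_zero : inv2 0 = 0 := by decide
lemma iSeq_zero : iSeq 0 = 1 := by rw [iSeq, inv2_zero]; rfl
lemma tm_zero : tm 0 = 1 := by
  have : cnt 0 1 = 0 := by simp [cnt]
  rw [tm, this]; rfl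

lemma iSeq_even (n : ℕ) : iSeq (2*n) = iSeq n * tm n := by
  rcases Nat.eq_zero_or_pos n with h | h
  · subst h; norm_num [iSeq_zero, tm_zero]
  have h1 : inv2 (2*n) = inv2 n + cnt n (n+1) := by
    rw [inv2_eq_F]
    have e : 2*n+1 = (2*n)+1 := rfl
    rw [e, F_even]
    have e2 : 2*n = (n+1) + (n-1) := by omega
    rw [e2, F_stable n (n+1) (n-1) (n_lt_two_pow n),
      cnt_stable n (n+1) (n-1) (n_lt_two_pow n), inv2_eq_F]
  rw [iSeq, iSeq, tm, h1, pow_add]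

lemma tm_even (n : ℕ) : tm (2*n) = tm n := by
  rcases Nat.eq_zero_or_pos n with h | h
  · subst h; rfl
  have h1 : cnt (2*n) (2*n+1) = cnt n (n+1) := by
    have e : 2*n+1 = (2*n)+1 := rfl
    rw [e, cnt_even]
    have e2 : 2*n = (n+1) + (n-1) := by omega
    rw [e2, cnt_stable n (n+1) (n-1) (n_lt_two_pow n)]
  rw [tm, tm, h1]

lemma tm_odd (n : ℕ) : tm (2*n+1) = -tm n := by
  have h1 : cnt (2*n+1) (2*n+2) = cnt n (n+1) + 1 := by
    have e : 2*n+2 = (2*n+1)+1 := rfl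
    rw [e, cnt_odd]
    have e2 : 2*n+1 = (n+1) + n := by omega
    rw [e2, cnt_stable n (n+1) n (n_lt_two_pow n)]
  rw [tm, tm]
  have e : 2*n+1+1 = 2*n+2 := rfl
  rw [e, h1, pow_succ]
  ring

lemma tm_cases (n : ℕ) : tm n = 1 ∨ tm n = -1 := by
  rw [tm]
  rcases Nat.even_or_odd (cnt n (n+1)) with h | h
  · left; exact h.neg_one_pow
  · right; exact h.neg_one_pow

lemma iSeq_cases (n : ℕ) : iSeq n = 1 ∨ iSeq n = -1 := by
  rw [iSeq]
  rcases Nat.even_or_odd (inv2 n) with h | h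
  · left; exact h.neg_one_pow
  · right; exact h.neg_one_pow

def U (N : ℕ) : ℤ := ∑ n ∈ Finset.range (N+1), iSeq n * tm n

lemma S_succ (m : ℕ) : S (m+1) = S m + iSeq (m+1) := Finset.sum_range_succ _ _
lemma U_succ (m : ℕ) : U (m+1) = U m + iSeq (m+1) * tm (m+1) := Finset.sum_range_succ _ _

lemma inv2_one : inv2 1 = 0 := by decide
lemma iSeq_one : iSeq 1 = 1 := by rw [iSeq, inv2_one]; rfl
lemma S_zero : S 0 = 1 := by simp [S, iSeq_zero]
lemma U_zero : U 0 = 1 := by simp [U, iSeq_zero, tm_zero]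
lemma tm_one : tm 1 = -1 := by
  have := tm_odd 0
  simpa [tm_zero] using this

lemma SU_odd (m : ℕ) : S (2*m+1) = S m + U m ∧ U (2*m+1) = S m - U m := by
  induction m with
  | zero =>
    constructor
    · show S 1 = S 0 + U 0
      rw [show (1:ℕ) = 0 + 1 from rfl, S_succ, S_zero, U_zero, iSeq_one]
    · show U 1 = S 0 - U 0
      rw [show (1:ℕ) = 0 + 1 from rfl, U_succ, U_zero, S_zero, iSeq_one, tm_one]
      ring
  | succ m ih =>
    obtain ⟨ihS, ihU⟩ := ih
    have e1 : 2*(m+1)+1 = (2*(m+1)) + 1 := rfl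
    have e2 : 2*(m+1) = (2*m+1) + 1 := by omega
    constructor
    · rw [e1, S_succ, e2, S_succ, ihS]
      rw [show (2*m+1)+1 = 2*(m+1) from by omega, iSeq_even]
      rw [show 2*(m+1)+1 = 2*(m+1)+1 from rfl, iSeq_odd]
      rw [S_succ, U_succ]
      ring
    · rw [e1, U_succ, e2, U_succ, ihU]
      rw [show (2*m+1)+1 = 2*(m+1) from by omega, iSeq_even, tm_even]
      rw [show 2*(m+1)+1 = 2*(m+1)+1 from rfl, iSeq_odd, tm_odd]
      rw [S_succ, U_succ]
      rcases tm_cases (m+1) with h | h <;> rw [h] <;> ring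

lemma S4m3 (m : ℕ) : S (4*m+3) = 2 * S m := by
  have e : 4*m+3 = 2*(2*m+1)+1 := by omega
  rw [e, (SU_odd (2*m+1)).1, (SU_odd m).1, (SU_odd m).2]
  ring

lemma S4m2 (m : ℕ) : S (4*m+2) = 2 * S m - iSeq m := by
  have e : 4*m+3 = (4*m+2)+1 := rfl
  have h := S_succ (4*m+2)
  rw [← e, S4m3] at h
  have e2 : 4*m+3 = 2*(2*m+1)+1 := by omega
  rw [e2, iSeq_odd, iSeq_odd] at h
  linarith

lemma S4m1 (m : ℕ) : S (4*m+1) = 2 * S m - iSeq m + iSeq m * tm m := by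
  have h := S_succ (4*m+1)
  rw [show (4*m+1)+1 = 4*m+2 from rfl, S4m2] at h
  have e2 : 4*m+2 = 2*(2*m+1) := by omega
  rw [e2, iSeq_even, iSeq_odd, tm_odd] at h
  linarith

lemma S4m0 (m : ℕ) : S (4*m) = 2 * S m - iSeq m := by
  have h := S_succ (4*m)
  rw [show (4*m)+1 = 4*m+1 from rfl, S4m1] at h
  have e2 : 4*m+1 = 2*(2*m)+1 := by omega
  rw [e2, iSeq_odd, iSeq_even] at h
  linarith

lemma tm_two : tm 2 = -1 := by
  have := tm_even 1; rw [tm_one] at this; exact this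

lemma tm_three : tm 3 = 1 := by
  have := tm_odd 1
  rw [tm_one] at this
  simpa using this

lemma tm_4y (y : ℕ) : tm (4*y) = tm y := by
  have e : 4*y = 2*(2*y) := by omega
  rw [e, tm_even, tm_even]

lemma tm_4y3 (y : ℕ) : tm (4*y+3) = tm y := by
  have e : 4*y+3 = 2*(2*y+1)+1 := by omega
  rw [e, tm_odd, tm_odd]
  ring

lemma tm_A (j : ℕ) : tm (3*4^j) = 1 := by
  induction j with
  | zero => simpa using tm_three
  | succ j ih =>
    have e : 3*4^(j+1) = 4*(3*4^j) := by ring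
    rw [e, tm_4y, ih]

lemma tm_B (j : ℕ) : tm (3*4^j - 1) = -1 := by
  induction j with
  | zero => simpa using tm_two
  | succ j ih =>
    have h4 : (1:ℕ) ≤ 4^j := Nat.one_le_pow _ _ (by norm_num)
    have e : 3*4^(j+1) - 1 = 4*(3*4^j - 1)+3 := by
      have : (4:ℕ)^(j+1) = 4*4^j := by ring
      omega
    rw [e, tm_4y3, ih]

lemma S_one : S 1 = 2 := by
  rw [show (1:ℕ) = 0+1 from rfl, S_succ, S_zero, iSeq_one]; norm_num

lemma S_top (j : ℕ) : S (2^(2*j+1) - 1) = 2^(j+1) := by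
  induction j with
  | zero => simpa using S_one
  | succ j ih =>
    have h2 : (1:ℕ) ≤ 2^(2*j+1) := Nat.one_le_pow _ _ (by norm_num)
    have e : 2^(2*(j+1)+1) - 1 = 4*(2^(2*j+1) - 1)+3 := by
      have : (2:ℕ)^(2*(j+1)+1) = 4*2^(2*j+1) := by ring
      omega
    rw [e, S4m3, ih]
    ring

lemma S_two : S 2 = 1 := by
  have := S4m2 0; rw [show 4*0+2 = 2 from rfl, S_zero, iSeq_zero] at this; linarith
lemma S_three : S 3 = 2 := by
  have := S4m3 0; rw [show 4*0+3 = 3 from rfl, S_zero] at this; linarith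
lemma S_four : S 4 = 3 := by
  have := S4m0 1; rw [show 4*1 = 4 from rfl, S_one, iSeq_one] at this; linarith
lemma S_five : S 5 = 2 := by
  have := S4m1 1; rw [show 4*1+1 = 5 from rfl, S_one, iSeq_one, tm_one] at this; linarith
lemma S_six : S 6 = 3 := by
  have := S4m2 1; rw [show 4*1+2 = 6 from rfl, S_one, iSeq_one] at this; linarith
lemma S_seven : S 7 = 4 := by
  have := S4m3 1; rw [show 4*1+3 = 7 from rfl, S_one] at this; linarith

theorem aux (j : ℕ) (n : ℕ) (h1 : 2^(2*j+1) - 1 ≤ n) (h2 : n ≤ 2^(2*j+3) - 1) :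
    (2:ℤ)^j ≤ S n ∧ (S n = 2^j ↔ n = 3*4^j - 1) := by
  induction j generalizing n with
  | zero =>
    norm_num at h1 h2 ⊢
    interval_cases n <;>
      norm_num [S_one, S_two, S_three, S_four, S_five, S_six, S_seven]
  | succ j ih =>
    have e2j : (2:ℕ)^(2*j) = 4^j := by rw [pow_mul]; norm_num
    have e21 : (2:ℕ)^(2*j+1) = 2*4^j := by rw [pow_add, e2j]; ring
    have e23 : (2:ℕ)^(2*j+3) = 8*4^j := by rw [pow_add, e2j]; ring
    have e25 : (2:ℕ)^(2*j+5) = 32*4^j := by rw [pow_add, e2j]; ring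
    have e4 : (4:ℕ)^(j+1) = 4*4^j := by ring
    have hA : (1:ℕ) ≤ 4^j := Nat.one_le_pow _ _ (by norm_num)
    have hB : (1:ℤ) ≤ 2^j := by
      have : (1:ℕ) ≤ 2^j := Nat.one_le_pow _ _ (by norm_num)
      exact_mod_cast this
    have ez1 : (2:ℤ)^(j+1) = 2*2^j := by ring
    rw [show 2*(j+1)+1 = 2*j+3 by omega] at h1
    rw [show 2*(j+1)+3 = 2*j+5 by omega] at h2
    by_cases htop : n = 2^(2*j+3) - 1
    · subst htop
      have hs : S (2^(2*j+3) - 1) = 2^(j+2) := by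
        have := S_top (j+1)
        rw [show 2*(j+1)+1 = 2*j+3 by omega] at this
        exact this
      rw [hs]
      have ez2 : (2:ℤ)^(j+2) = 4*2^j := by ring
      refine ⟨by linarith, ?_, ?_⟩
      · intro h; exfalso; rw [ez2, ez1] at h; linarith
      · intro h; exfalso; omega
    · have hn3 : 2^(2*j+3) ≤ n := by omega
      obtain ⟨m, r, hr, hn⟩ : ∃ m r, r < 4 ∧ n = 4*m + r := ⟨n/4, n%4, by omega, by omega⟩
      have hmlo : 2^(2*j+1) ≤ m := by omega
      have hmhi : m ≤ 2^(2*j+3) - 1 := by omega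
      have hm1 : 1 ≤ m := by omega
      obtain ⟨IHm1, IHm2⟩ := ih m (by omega) hmhi
      obtain ⟨IHp1, IHp2⟩ := ih (m-1) (by omega) (by omega)
      have hiS : iSeq m = S m - S (m-1) := by
        have := S_succ (m-1)
        rw [show (m-1)+1 = m by omega] at this
        linarith
      interval_cases r
      · -- n = 4*m
        rw [show 4*m+0 = 4*m by omega] at hn
        subst hn
        have hS : S (4*m) = S m + S (m-1) := by rw [S4m0]; linarith
        refine ⟨by rw [hS, ez1]; linarith, ?_, ?_⟩
        · intro h
          exfalso
          rw [hS, ez1] at h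
          have hm : S m = 2^j := by linarith
          have hp : S (m-1) = 2^j := by linarith
          have := IHm2.mp hm
          have := IHp2.mp hp
          omega
        · intro h; exfalso; omega
      · -- n = 4*m+1
        subst hn
        rcases tm_cases m with ht | ht
        · have hS : S (4*m+1) = 2 * S m := by rw [S4m1, ht]; ring
          refine ⟨by rw [hS, ez1]; linarith, ?_, ?_⟩
          · intro h
            exfalso
            rw [hS, ez1] at h
            have hm : S m = 2^j := by linarith
            have := IHm2.mp hm
            rw [this, tm_B] at ht
            norm_num at ht
          · intro h; exfalso; omega
        · have hS : S (4*m+1) = 2 * S (m-1) := by rw [S4m1, ht, hiS]; ring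
          refine ⟨by rw [hS, ez1]; linarith, ?_, ?_⟩
          · intro h
            exfalso
            rw [hS, ez1] at h
            have hp : S (m-1) = 2^j := by linarith
            have hm0 := IHp2.mp hp
            have hm' : m = 3*4^j := by omega
            rw [hm', tm_A] at ht
            norm_num at ht
          · intro h; exfalso; omega
      · -- n = 4*m+2
        subst hn
        have hS : S (4*m+2) = S m + S (m-1) := by rw [S4m2]; linarith
        refine ⟨by rw [hS, ez1]; linarith, ?_, ?_⟩
        · intro h
          exfalso
          rw [hS, ez1] at h
          have hm : S m = 2^j := by linarith
          have hp : S (m-1) = 2^j := by linarith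
          have := IHm2.mp hm
          have := IHp2.mp hp
          omega
        · intro h; exfalso; omega
      · -- n = 4*m+3
        subst hn
        rw [S4m3]
        refine ⟨by rw [ez1]; linarith, ?_, ?_⟩
        · intro h
          rw [ez1] at h
          have hm : S m = 2^j := by linarith
          have := IHm2.mp hm
          omega
        · intro h
          have hm : m = 3*4^j - 1 := by omega
          rw [IHm2.mpr hm, ez1]

theorem summatory_min_on_Ik (k : ℕ) (hk : 1 ≤ k) (n : ℕ)
    (h₁ : 2 ^ (2 * k - 1) ≤ n) (h₂ : n ≤ 2 ^ (2 * k + 1) - 1) :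
    2 ^ (k - 1) ≤ S n ∧ (S n = 2 ^ (k - 1) ↔ n = 3 * 4 ^ (k - 1) - 1) := by
  obtain ⟨j, rfl⟩ : ∃ j, k = j + 1 := ⟨k - 1, by omega⟩
  rw [show 2*(j+1) - 1 = 2*j+1 by omega] at h₁
  rw [show 2*(j+1) + 1 = 2*j+3 by omega] at h₂
  rw [show j+1-1 = j by omega]
  exact aux j n (by omega) h₂
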